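/- For every positive integer n, the sum over all permutations σ of [n] of (-1) raised to the cycle descent number of σ equals 2^(n-1). (This is the q = -1 evaluation of the generating function of the cycle descent number, showing it exhibits the cyclic sieving phenomenon for involutions with 2^(n-1) fixed points.) -/

import Mathlib

open Finset Equiv Equiv.Perm

def cdesMat (n : ℕ) : Matrix (Fin n) (Fin n) ℤ :=
  fun i j => if (j : ℕ) < (i : ℕ) then -1 else 1

lemma cdesMat_det : ∀ n : ℕ, (cdesMat (n + 1)).det = 2 ^ n := by
  intro n
  induction n with
  | zero => simp [cdesMat, Matrix.det_fin_one]
  | succ n ih =>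
    have h01 : (0 : Fin (n + 2)) ≠ 1 := by simp
    have key := Matrix.det_updateRow_add_smul_self (cdesMat (n + 2)) h01 (-1 : ℤ)
    rw [← key, Matrix.det_succ_row_zero]
    rw [Finset.sum_eq_single 0]
    · have hsub : (Matrix.updateRow (cdesMat (n + 2)) 0
          (cdesMat (n + 2) 0 + (-1 : ℤ) • cdesMat (n + 2) 1)).submatrix
            Fin.succ (Fin.succAbove 0) = cdesMat (n + 1) := by
        ext i j
        simp [Matrix.updateRow_ne (Fin.succ_ne_zero i), cdesMat, Fin.succAbove]
      rw [hsub, ih]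
      simp [Matrix.updateRow_self, cdesMat]
      ring
    · intro j _ hj
      have : (Matrix.updateRow (cdesMat (n + 2)) 0
          (cdesMat (n + 2) 0 + (-1 : ℤ) • cdesMat (n + 2) 1)) 0 j = 0 := by
        have hj' : (0 : ℕ) < (j : ℕ) := Nat.pos_of_ne_zero (fun h => hj (Fin.ext h))
        simp [Matrix.updateRow_self, cdesMat, Nat.not_lt.mpr hj', Nat.lt_of_lt_of_le Nat.zero_lt_one hj']
      rw [this]
      simp
    · simp

lemma cdes_sign (n : ℕ) (σ : Equiv.Perm (Fin n)) :
    (-1 : ℤ) ^ (univ.filter (fun x : Fin n =>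
        σ x < x ∧ ∃ y : Fin n, σ.SameCycle x y ∧ y < σ x)).card
    = (Equiv.Perm.sign σ : ℤ) *
      (-1 : ℤ) ^ (univ.filter (fun x : Fin n => x < σ x)).card := by
  classical
  set A : Finset (Fin n) := univ.filter (fun x => σ x < x) with hA
  set D : Finset (Fin n) := univ.filter (fun x : Fin n =>
        σ x < x ∧ ∃ y : Fin n, σ.SameCycle x y ∧ y < σ x) with hD
  set P : Finset (Fin n) := univ.filter (fun x : Fin n =>
        σ x < x ∧ ¬ ∃ y : Fin n, σ.SameCycle x y ∧ y < σ x) with hP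
  set E : Finset (Fin n) := univ.filter (fun x : Fin n => x < σ x) with hE
  set Mm : Finset (Fin n) := univ.filter (fun x : Fin n =>
        σ x ≠ x ∧ ∀ y : Fin n, σ.SameCycle x y → x ≤ y) with hM
  -- 1. D.card + P.card = A.card
  have hDPA : D.card + P.card = A.card := by
    have h1 : D = A.filter (fun x => ∃ y : Fin n, σ.SameCycle x y ∧ y < σ x) := by
      rw [hD, hA, Finset.filter_filter]
    have h2 : P = A.filter (fun x => ¬ ∃ y : Fin n, σ.SameCycle x y ∧ y < σ x) := by
      rw [hP, hA, Finset.filter_filter]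
    rw [h1, h2, Finset.card_filter_add_card_filter_not]
  -- 2. A.card + E.card = σ.support.card
  have hAES : A.card + E.card = σ.support.card := by
    have h1 : A = σ.support.filter (fun x => σ x < x) := by
      ext x
      simp only [hA, mem_filter, mem_univ, true_and, Equiv.Perm.mem_support]
      exact ⟨fun h => ⟨ne_of_lt h, h⟩, fun h => h.2⟩
    have h2 : E = σ.support.filter (fun x => ¬ σ x < x) := by
      ext x
      simp only [hE, mem_filter, mem_univ, true_and, Equiv.Perm.mem_support]
      constructor
      · exact fun h => ⟨ne_of_gt h, not_lt.mpr (le_of_lt h)⟩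
      · rintro ⟨hne, hnlt⟩
        exact lt_of_le_of_ne (not_lt.mp hnlt) (Ne.symm hne)
    rw [h1, h2, Finset.card_filter_add_card_filter_not]
  -- 3. P.card = Mm.card
  have hPM : P.card = Mm.card := by
    apply Finset.card_bij (fun x _ => σ x)
    · intro x hx
      simp only [hP, mem_filter, mem_univ, true_and] at hx
      obtain ⟨hlt, hmin⟩ := hx
      push_neg at hmin
      simp only [hM, mem_filter, mem_univ, true_and]
      refine ⟨fun h => absurd (σ.injective h) (ne_of_lt hlt), fun y hy => ?_⟩
      exact hmin y (Equiv.Perm.sameCycle_apply_left.mp hy)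
    · intro x hx x' hx' h
      exact σ.injective h
    · intro y hy
      simp only [hM, mem_filter, mem_univ, true_and] at hy
      obtain ⟨hne, hmin⟩ := hy
      refine ⟨σ⁻¹ y, ?_, by simp⟩
      simp only [hP, mem_filter, mem_univ, true_and]
      have hsc : σ.SameCycle y (σ⁻¹ y) := ⟨-1, by simp⟩
      have hyx : y ≠ σ⁻¹ y := by
        intro h
        apply hne
        conv_lhs => rw [h]
        simp
      constructor
      · rw [show σ (σ⁻¹ y) = y by simp]
        exact lt_of_le_of_ne (hmin _ hsc) hyx
      · rintro ⟨z, hz, hzlt⟩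
        rw [show σ (σ⁻¹ y) = y by simp] at hzlt
        exact not_lt.mpr (hmin z (hsc.trans hz)) hzlt
  -- 4. Mm.card = σ.cycleFactorsFinset.card
  have hMC : Mm.card = σ.cycleFactorsFinset.card := by
    apply Finset.card_bij (fun x _ => σ.cycleOf x)
    · intro x hx
      simp only [hM, mem_filter, mem_univ, true_and] at hx
      exact Equiv.Perm.cycleOf_mem_cycleFactorsFinset_iff.mpr (Equiv.Perm.mem_support.mpr hx.1)
    · intro x hx x' hx' h
      simp only [hM, mem_filter, mem_univ, true_and] at hx hx'
      have hx'mem : x' ∈ (σ.cycleOf x).support := by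
        rw [h]
        exact Equiv.Perm.mem_support_cycleOf_iff.mpr ⟨Equiv.Perm.SameCycle.refl _ _,
          Equiv.Perm.mem_support.mpr hx'.1⟩
      have hsc : σ.SameCycle x x' := (Equiv.Perm.mem_support_cycleOf_iff.mp hx'mem).1
      exact le_antisymm (hx.2 x' hsc) (hx'.2 x hsc.symm)
    · intro c hc
      have hcyc := Equiv.Perm.mem_cycleFactorsFinset_iff.mp hc
      have hne : c.support.Nonempty := hcyc.1.nonempty_support
      set x := c.support.min' hne with hx
      have hxmem : x ∈ c.support := c.support.min'_mem hne
      have hcx : c = σ.cycleOf x := Equiv.Perm.cycle_is_cycleOf hxmem hc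
      have hxs : σ x ≠ x := by
        rw [← hcyc.2 x hxmem]
        exact Equiv.Perm.mem_support.mp hxmem
      refine ⟨x, ?_, hcx.symm⟩
      simp only [hM, mem_filter, mem_univ, true_and]
      refine ⟨hxs, fun y hy => ?_⟩
      have : y ∈ c.support := by
        rw [hcx]
        exact Equiv.Perm.mem_support_cycleOf_iff.mpr ⟨hy, Equiv.Perm.mem_support.mpr hxs⟩
      exact c.support.min'_le y this
  -- 5. sign
  have hsign : (Equiv.Perm.sign σ : ℤ)
      = (-1 : ℤ) ^ (σ.support.card + σ.cycleFactorsFinset.card) := by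
    have := Equiv.Perm.sign_of_cycleType σ
    rw [this]
    rw [Equiv.Perm.sum_cycleType]
    have hcard : Multiset.card σ.cycleType = σ.cycleFactorsFinset.card := by
      rw [Equiv.Perm.cycleType_def, Multiset.card_map]
      rfl
    rw [hcard]
    push_cast
    rfl
  rw [hsign]
  rw [← pow_add]
  have : σ.support.card + σ.cycleFactorsFinset.card + E.card
      = D.card + 2 * (P.card + E.card) := by omega
  rw [this, pow_add, pow_mul]
  norm_num

/-- The generating function of the cycle descent number on `S_n` evaluated at
`q = -1` equals `2^(n-1)`. The cycle descent number counts elements `x` with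
`σ x < x` such that `σ x` is not the minimal element of the cycle of `x`. -/
theorem cycle_descent_q_eq_neg_one (n : ℕ) (hn : 0 < n) :
    ∑ σ : Equiv.Perm (Fin n),
      (-1 : ℤ) ^ (univ.filter (fun x : Fin n =>
        σ x < x ∧ ∃ y : Fin n, σ.SameCycle x y ∧ y < σ x)).card
      = 2 ^ (n - 1) := by
  classical
  have hprod : ∀ σ : Equiv.Perm (Fin n),
      ∏ i, cdesMat n (σ i) i
        = (-1 : ℤ) ^ (univ.filter (fun x : Fin n => x < σ x)).card := by
    intro σ
    unfold cdesMat
    rw [Finset.prod_ite, Finset.prod_const, Finset.prod_const, one_pow, mul_one]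
    congr 1
  have h1 : ∑ σ : Equiv.Perm (Fin n),
      (-1 : ℤ) ^ (univ.filter (fun x : Fin n =>
        σ x < x ∧ ∃ y : Fin n, σ.SameCycle x y ∧ y < σ x)).card
      = (cdesMat n).det := by
    rw [Matrix.det_apply]
    refine Finset.sum_congr rfl fun σ _ => ?_
    rw [cdes_sign, ← hprod σ, Units.smul_def, zsmul_eq_mul]
    push_cast
    ring
  rw [h1]
  obtain ⟨m, rfl⟩ : ∃ m, n = m + 1 := ⟨n - 1, (Nat.succ_pred_eq_of_pos hn).symm⟩
  rw [cdesMat_det]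
  simp
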